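/- Suppose β ∈ (1,2) and there exist 0-1 words w = w₁...wₙ and w' = w'₁...w'ₙ' with w₁ ≠ w'₁ and a point y with g_w(y) = y and g_{w'}(y) = y (a 'double period' point). Then β is an algebraic integer: it is a root of a monic polynomial with integer coefficients. -/

import Mathlib

open Polynomial

/-- Composition g_w = g_{wₙ} ∘ ... ∘ g_{w₁} where each letter d ∈ {0,1} gives
the map x ↦ βx + d(1-β); the fold applies w₁ first. -/
def gword (β : ℝ) (w : List ℝ) (x : ℝ) : ℝ :=
  w.foldl (fun y d => β * y + d * (1 - β)) x

/-- The polynomial Σ lᵢ X^{n-i} built from a list of integer digits. -/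
noncomputable def Qpoly (l : List ℤ) : ℤ[X] :=
  l.foldl (fun p d => X * p + C d) 0

lemma Qpoly_foldl (l : List ℤ) (p : ℤ[X]) :
    l.foldl (fun q d => X * q + C d) p = X ^ l.length * p + Qpoly l := by
  induction l generalizing p with
  | nil => simp [Qpoly]
  | cons d l ih =>
    have hcons : Qpoly (d :: l) = X ^ l.length * (X * 0 + C d) + Qpoly l := ih _
    simp only [List.foldl_cons, List.length_cons]
    rw [ih, hcons]
    ring

lemma Qpoly_cons (d : ℤ) (l : List ℤ) :
    Qpoly (d :: l) = X ^ l.length * C d + Qpoly l := by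
  rw [Qpoly, List.foldl_cons, Qpoly_foldl]
  ring

lemma Qpoly_degree_le (d : ℤ) (l : List ℤ) :
    degree (Qpoly (d :: l)) ≤ (l.length : WithBot ℕ) := by
  induction l generalizing d with
  | nil =>
    rw [Qpoly_cons]
    simpa [Qpoly] using (degree_C_le (a := d))
  | cons e t ih =>
    rw [Qpoly_cons]
    refine (degree_add_le _ _).trans (max_le ?_ ?_)
    · refine (degree_mul_le _ _).trans ?_
      calc degree ((X : ℤ[X]) ^ (e :: t).length) + degree (C d)
          ≤ ((e :: t).length : WithBot ℕ) + 0 := by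
            exact add_le_add (le_of_eq (degree_X_pow _)) degree_C_le
        _ = ((e :: t).length : WithBot ℕ) := add_zero _
    · exact (ih e).trans (by exact_mod_cast Nat.le_succ _)

lemma Qpoly_coeff_high (d : ℤ) (l : List ℤ) {k : ℕ} (hk : l.length < k) :
    (Qpoly (d :: l)).coeff k = 0 :=
  coeff_eq_zero_of_degree_lt ((Qpoly_degree_le d l).trans_lt (by exact_mod_cast hk))

lemma Qpoly_coeff_top (d : ℤ) (l : List ℤ) : (Qpoly (d :: l)).coeff l.length = d := by
  rw [Qpoly_cons, coeff_add]
  have h0 : (Qpoly l).coeff l.length = 0 := by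
    cases l with
    | nil => simp [Qpoly]
    | cons e t => exact Qpoly_coeff_high e t (Nat.lt_succ_self _)
  rw [h0, add_zero, mul_comm, coeff_C_mul, coeff_X_pow]
  simp

lemma gword_cons (β d x : ℝ) (t : List ℝ) :
    gword β (d :: t) x = gword β t (β * x + d * (1 - β)) := rfl

lemma gword_shift (β : ℝ) (w : List ℝ) (x : ℝ) :
    gword β w x = β ^ w.length * x + gword β w 0 := by
  induction w generalizing x with
  | nil => simp [gword]
  | cons d t ih =>
    rw [gword_cons, ih, gword_cons, ih (β * 0 + d * (1 - β))]
    simp only [List.length_cons, pow_succ]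
    ring

/-- The 0/1 real digits converted to integers. -/
noncomputable def zl (w : List ℝ) : List ℤ := w.map fun d => if d = 1 then 1 else 0

lemma gword_zero (β : ℝ) (w : List ℝ) (hw : ∀ d ∈ w, d = 0 ∨ d = 1) :
    gword β w 0 = (1 - β) * (aeval β (Qpoly (zl w))) := by
  induction w with
  | nil => simp [gword, Qpoly, zl]
  | cons d t ih =>
    have hd : (algebraMap ℤ ℝ) (if d = (1 : ℝ) then (1 : ℤ) else 0) = d := by
      rcases hw d (List.mem_cons_self) with h | h <;> simp [h]
    have ht := ih fun e he => hw e (List.mem_cons_of_mem _ he)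
    have hz : zl (d :: t) = (if d = (1 : ℝ) then (1 : ℤ) else 0) :: zl t := rfl
    rw [gword_cons, gword_shift, ht, hz, Qpoly_cons]
    simp only [map_add, map_mul, map_pow, aeval_X, aeval_C, List.length_map, zl]
    rw [hd]
    ring

lemma main_aux (β : ℝ) (hβ : β ≠ 1) (a b y : ℝ) (ta tb : List ℝ)
    (hta : ∀ d ∈ ta, d = 0 ∨ d = 1) (htb : ∀ d ∈ tb, d = 0 ∨ d = 1)
    (ha : a = 1) (hb : b = 0)
    (hfix : gword β (a :: ta) y = y) (hfix' : gword β (b :: tb) y = y) :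
    IsIntegral ℤ β := by
  have hwa : ∀ d ∈ (a :: ta), d = 0 ∨ d = 1 := by
    intro d hd
    rcases List.mem_cons.1 hd with rfl | hd
    · exact Or.inr ha
    · exact hta d hd
  have hwb : ∀ d ∈ (b :: tb), d = 0 ∨ d = 1 := by
    intro d hd
    rcases List.mem_cons.1 hd with rfl | hd
    · exact Or.inl hb
    · exact htb d hd
  set n : ℕ := ta.length + 1 with hn
  set m : ℕ := tb.length + 1 with hm
  set Qa := Qpoly (zl (a :: ta)) with hQa
  set Qb := Qpoly (zl (b :: tb)) with hQb
  have hza : zl (a :: ta) = 1 :: zl ta := by simp [zl, ha]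
  have hzb : zl (b :: tb) = 0 :: zl tb := by simp [zl, hb]
  have hlen_a : (zl ta).length = ta.length := List.length_map _
  have hlen_b : (zl tb).length = tb.length := List.length_map _
  refine ⟨(X ^ m - 1) * Qa - (X ^ n - 1) * Qb, ?_, ?_⟩
  · -- monic
    apply monic_of_degree_le (ta.length + tb.length + 1)
    · refine (degree_sub_le _ _).trans (max_le ?_ ?_)
      · refine (degree_mul_le _ _).trans ?_
        have h1 : degree ((X : ℤ[X]) ^ m - 1) ≤ (m : WithBot ℕ) := by
          refine (degree_sub_le _ _).trans (max_le (le_of_eq (degree_X_pow _)) ?_)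
          exact degree_one_le.trans (by exact_mod_cast Nat.zero_le m)
        have h2 : degree Qa ≤ (ta.length : WithBot ℕ) := by
          rw [hQa, hza, ← hlen_a]
          exact Qpoly_degree_le _ _
        calc degree ((X : ℤ[X]) ^ m - 1) + degree Qa
            ≤ (m : WithBot ℕ) + (ta.length : WithBot ℕ) := add_le_add h1 h2
          _ = ((ta.length + tb.length + 1 : ℕ) : WithBot ℕ) := by
              rw [hm]; push_cast; ring
      · refine (degree_mul_le _ _).trans ?_
        have h1 : degree ((X : ℤ[X]) ^ n - 1) ≤ (n : WithBot ℕ) := by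
          refine (degree_sub_le _ _).trans (max_le (le_of_eq (degree_X_pow _)) ?_)
          exact degree_one_le.trans (by exact_mod_cast Nat.zero_le n)
        have h2 : degree Qb ≤ (tb.length : WithBot ℕ) := by
          rw [hQb, hzb, ← hlen_b]
          exact Qpoly_degree_le _ _
        calc degree ((X : ℤ[X]) ^ n - 1) + degree Qb
            ≤ (n : WithBot ℕ) + (tb.length : WithBot ℕ) := add_le_add h1 h2
          _ = ((ta.length + tb.length + 1 : ℕ) : WithBot ℕ) := by
              rw [hn]; push_cast; ring
    · have e1 : ((X ^ m - 1) * Qa).coeff (ta.length + tb.length + 1) = 1 := by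
        rw [sub_mul, one_mul, coeff_sub]
        have hN : ta.length + tb.length + 1 = ta.length + m := by rw [hm]; ring
        rw [hN, coeff_X_pow_mul]
        have : Qa.coeff ta.length = 1 := by
          rw [hQa, hza, ← hlen_a, Qpoly_coeff_top]
        rw [this]
        have : Qa.coeff (ta.length + m) = 0 := by
          rw [hQa, hza]
          exact Qpoly_coeff_high _ _ (by omega)
        rw [this, sub_zero]
      have e2 : ((X ^ n - 1) * Qb).coeff (ta.length + tb.length + 1) = 0 := by
        rw [sub_mul, one_mul, coeff_sub]
        have hN : ta.length + tb.length + 1 = tb.length + n := by rw [hn]; ring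
        rw [hN, coeff_X_pow_mul]
        have h1 : Qb.coeff tb.length = 0 := by
          rw [hQb, hzb, ← hlen_b, Qpoly_coeff_top]
        have h2 : Qb.coeff (tb.length + n) = 0 := by
          rw [hQb, hzb]
          exact Qpoly_coeff_high _ _ (by omega)
        rw [h1, h2, sub_zero]
      rw [coeff_sub, e1, e2, sub_zero]
  · -- evaluates to zero at β
    have hSa : gword β (a :: ta) 0 = (1 - β) * aeval β Qa := gword_zero β _ hwa
    have hSb : gword β (b :: tb) 0 = (1 - β) * aeval β Qb := gword_zero β _ hwb
    have hfa : β ^ n * y + (1 - β) * aeval β Qa = y := by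
      rw [← hSa]
      have := gword_shift β (a :: ta) y
      rw [hfix] at this
      simpa [hn] using this.symm
    have hfb : β ^ m * y + (1 - β) * aeval β Qb = y := by
      rw [← hSb]
      have := gword_shift β (b :: tb) y
      rw [hfix'] at this
      simpa [hm] using this.symm
    have h1β : (1 : ℝ) - β ≠ 0 := fun h => hβ (by linarith [sub_eq_zero.1 h])
    have key : (1 - β) * ((β ^ m - 1) * aeval β Qa - (β ^ n - 1) * aeval β Qb) = 0 := by
      have ea : (1 - β) * aeval β Qa = y - β ^ n * y := by linarith
      have eb : (1 - β) * aeval β Qb = y - β ^ m * y := by linarith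
      calc (1 - β) * ((β ^ m - 1) * aeval β Qa - (β ^ n - 1) * aeval β Qb)
          = (β ^ m - 1) * ((1 - β) * aeval β Qa) - (β ^ n - 1) * ((1 - β) * aeval β Qb) := by ring
        _ = (β ^ m - 1) * (y - β ^ n * y) - (β ^ n - 1) * (y - β ^ m * y) := by rw [ea, eb]
        _ = 0 := by ring
    have hz : (β ^ m - 1) * aeval β Qa - (β ^ n - 1) * aeval β Qb = 0 :=
      (mul_eq_zero.1 key).resolve_left h1β
    rw [← aeval_def]
    simpa [map_sub, map_mul, map_pow, map_one] using hz

/-- a double period point forces β to be an algebraic integer. -/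
theorem double_period_algebraic_integer (β : ℝ) (w w' : List ℝ) (y : ℝ)
    (hβ : 1 < β ∧ β < 2)
    (hw : ∀ d ∈ w, d = 0 ∨ d = 1) (hw' : ∀ d ∈ w', d = 0 ∨ d = 1)
    (hne : w ≠ []) (hne' : w' ≠ [])
    (hfirst : w.headI ≠ w'.headI)
    (hfix : gword β w y = y) (hfix' : gword β w' y = y) :
    IsIntegral ℤ β := by
  obtain ⟨a, ta, rfl⟩ := List.exists_cons_of_ne_nil hne
  obtain ⟨b, tb, rfl⟩ := List.exists_cons_of_ne_nil hne'
  have hβ1 : β ≠ 1 := ne_of_gt hβ.1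
  have hta : ∀ d ∈ ta, d = 0 ∨ d = 1 := fun d hd => hw d (List.mem_cons_of_mem _ hd)
  have htb : ∀ d ∈ tb, d = 0 ∨ d = 1 := fun d hd => hw' d (List.mem_cons_of_mem _ hd)
  have hab : a ≠ b := by simpa using hfirst
  rcases hw a (List.mem_cons_self) with ha | ha
  · rcases hw' b (List.mem_cons_self) with hb | hb
    · exact absurd (ha.trans hb.symm) hab
    · exact main_aux β hβ1 b a y tb ta htb hta hb ha hfix' hfix
  · rcases hw' b (List.mem_cons_self) with hb | hb
    · exact main_aux β hβ1 a b y ta tb hta htb ha hb hfix hfix'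
    · exact absurd (ha.trans hb.symm) hab
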